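/- Nonexistence for large thickness combined with the equator case: for Θ ∈ (1, ∞) there is no closed C¹ regular curve γ ⊂ S² with Δ[γ] ≥ Θ, while for Θ = 1 the set of such curves is exactly the set of great circles; in particular the maximal length of a closed spherical curve of thickness ≥ 1 is 2π. -/

import Mathlib

open Metric Set Real Function MeasureTheory
open scoped RealInnerProductSpace

noncomputable section

abbrev E3 := EuclideanSpace ℝ (Fin 3)

open Classical in
/-- Circumcircle radius of three points in `ℝ³`: `∞` for collinear triples,
otherwise `abc/(4·area)` via Heron's formula. -/
noncomputable def circumradius3 (x y z : E3) : ENNReal :=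
  if Collinear ℝ ({x, y, z} : Set E3) then ⊤
  else ENNReal.ofReal (dist x y * dist y z * dist z x /
    Real.sqrt ((dist x y + dist y z + dist z x) * (-dist x y + dist y z + dist z x) *
      (dist x y - dist y z + dist z x) * (dist x y + dist y z - dist z x)))

/-- Thickness of a set of points (the image of a curve): infimum of circumradii
over all triples of distinct points. -/
noncomputable def thickness (Γ : Set E3) : ENNReal :=
  sInf {r | ∃ x ∈ Γ, ∃ y ∈ Γ, ∃ z ∈ Γ, x ≠ y ∧ y ≠ z ∧ x ≠ z ∧ r = circumradius3 x y z}


/-- A closed `C¹` regular spherical curve. -/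
def IsClosedSphericalCurve (γ : ℝ → E3) : Prop :=
  Periodic γ (2 * π) ∧ ContDiff ℝ 1 γ ∧ (∀ t, deriv γ t ≠ 0) ∧
    range γ ⊆ sphere (0 : E3) 1

/-! ### Auxiliary algebra -/

set_option linter.unusedSectionVars false

/-- scalar triple product -/
def trip (x y z : E3) : ℝ :=
  x 0 * (y 1 * z 2 - y 2 * z 1) - x 1 * (y 0 * z 2 - y 2 * z 0) + x 2 * (y 0 * z 1 - y 1 * z 0)

lemma inner3 (x y : E3) : ⟪x, y⟫ = x 0 * y 0 + x 1 * y 1 + x 2 * y 2 := by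
  simp [PiLp.inner_apply, Fin.sum_univ_three, RCLike.inner_apply, mul_comm]

lemma normsq3' (x : E3) (hx : ‖x‖ = 1) : x 0 ^ 2 + x 1 ^ 2 + x 2 ^ 2 = 1 := by
  have := EuclideanSpace.norm_eq x
  rw [hx] at this
  have h3 : (∑ i : Fin 3, ‖x i‖^2) = x 0^2 + x 1^2 + x 2^2 := by
    simp [Fin.sum_univ_three, sq_abs]
  nlinarith [Real.sq_sqrt (by positivity : (0:ℝ) ≤ ∑ i : Fin 3, ‖x i‖ ^ 2)]

lemma normsq3 (x : E3) (hx : x ∈ sphere (0:E3) 1) : x 0 ^ 2 + x 1 ^ 2 + x 2 ^ 2 = 1 :=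
  normsq3' x (by simpa using hx)

lemma distsq3 (x y : E3) : dist x y ^ 2 = (x 0 - y 0)^2 + (x 1 - y 1)^2 + (x 2 - y 2)^2 := by
  rw [EuclideanSpace.dist_eq, Real.sq_sqrt (by positivity)]
  simp [Fin.sum_univ_three, Real.dist_eq, sq_abs]

lemma gram_sq (x y z : E3) (hx : x 0^2+x 1^2+x 2^2 = 1) (hy : y 0^2+y 1^2+y 2^2 = 1)
    (hz : z 0^2+z 1^2+z 2^2 = 1) :
    1 - (x 0*y 0+x 1*y 1+x 2*y 2)^2 - (y 0*z 0+y 1*z 1+y 2*z 2)^2 - (x 0*z 0+x 1*z 1+x 2*z 2)^2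
      + 2*(x 0*y 0+x 1*y 1+x 2*y 2)*(y 0*z 0+y 1*z 1+y 2*z 2)*(x 0*z 0+x 1*z 1+x 2*z 2)
      = (trip x y z)^2 := by
  have base : (x 0^2+x 1^2+x 2^2) * (y 0^2+y 1^2+y 2^2) * (z 0^2+z 1^2+z 2^2)
      + 2*(x 0*y 0+x 1*y 1+x 2*y 2)*(y 0*z 0+y 1*z 1+y 2*z 2)*(x 0*z 0+x 1*z 1+x 2*z 2)
      - (x 0^2+x 1^2+x 2^2)*(y 0*z 0+y 1*z 1+y 2*z 2)^2
      - (y 0^2+y 1^2+y 2^2)*(x 0*z 0+x 1*z 1+x 2*z 2)^2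
      - (z 0^2+z 1^2+z 2^2)*(x 0*y 0+x 1*y 1+x 2*y 2)^2 = (trip x y z)^2 := by
    unfold trip; ring
  rw [hx, hy, hz] at base
  linear_combination base

private lemma sq_subst {a b c A B C : ℝ} (hA : a^2 = A) (hB : b^2 = B) (hC : c^2 = C) :
    (a+b+c)*(-a+b+c)*(a-b+c)*(a+b-c) = 2*A*B+2*B*C+2*C*A-A^2-B^2-C^2 ∧
    (a*b*c)^2 = A*B*C := by
  subst hA hB hC; constructor <;> ring

lemma heron_key (x y z : E3) (hx : x 0^2+x 1^2+x 2^2 = 1) (hy : y 0^2+y 1^2+y 2^2 = 1)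
    (hz : z 0^2+z 1^2+z 2^2 = 1) :
    (dist x y + dist y z + dist z x) * (-dist x y + dist y z + dist z x) *
      (dist x y - dist y z + dist z x) * (dist x y + dist y z - dist z x)
    = (dist x y * dist y z * dist z x)^2 + 4 * (trip x y z)^2 := by
  have h1 : dist x y ^ 2 = 2 - 2*(x 0*y 0+x 1*y 1+x 2*y 2) := by
    rw [distsq3]; linear_combination hx + hy
  have h2 : dist y z ^ 2 = 2 - 2*(y 0*z 0+y 1*z 1+y 2*z 2) := by
    rw [distsq3]; linear_combination hy + hz
  have h3 : dist z x ^ 2 = 2 - 2*(x 0*z 0+x 1*z 1+x 2*z 2) := by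
    rw [distsq3]; linear_combination hz + hx
  obtain ⟨e1, e2⟩ := sq_subst h1 h2 h3
  rw [e1, e2]
  linear_combination 4 * gram_sq x y z hx hy hz

section main
variable {x y z : E3} (hx : x ∈ sphere (0:E3) 1) (hy : y ∈ sphere (0:E3) 1)
  (hz : z ∈ sphere (0:E3) 1) (hxy : x ≠ y) (hyz : y ≠ z) (hxz : x ≠ z)

include hx hy hz hxy hyz hxz

lemma abc_pos : 0 < dist x y * dist y z * dist z x := by
  have h1 : 0 < dist x y := dist_pos.2 hxy
  have h2 : 0 < dist y z := dist_pos.2 hyz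
  have h3 : 0 < dist z x := dist_pos.2 (Ne.symm hxz)
  positivity

lemma heron_pos : 0 < (dist x y + dist y z + dist z x) * (-dist x y + dist y z + dist z x) *
      (dist x y - dist y z + dist z x) * (dist x y + dist y z - dist z x) := by
  rw [heron_key x y z (normsq3 x hx) (normsq3 y hy) (normsq3 z hz)]
  have := abc_pos hx hy hz hxy hyz hxz
  nlinarith [sq_nonneg (trip x y z)]

lemma noncol : ¬ Collinear ℝ ({x, y, z} : Set E3) := by
  intro hc
  have hpos := heron_pos hx hy hz hxy hyz hxz
  rcases hc.wbtw_or_wbtw_or_wbtw with h | h | h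
  · have h' := h.dist_add_dist
    rw [dist_comm x z] at h'
    have h0 : (dist x y + dist y z + dist z x) * (-dist x y + dist y z + dist z x) *
      (dist x y - dist y z + dist z x) * (dist x y + dist y z - dist z x) = 0 := by
      rw [← h']; ring
    linarith
  · have h' := h.dist_add_dist
    rw [dist_comm y x] at h'
    have h0 : (dist x y + dist y z + dist z x) * (-dist x y + dist y z + dist z x) *
      (dist x y - dist y z + dist z x) * (dist x y + dist y z - dist z x) = 0 := by
      rw [← h']; ring
    linarith
  · have h' := h.dist_add_dist
    rw [show dist z y = dist y z from dist_comm z y] at h'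
    have h0 : (dist x y + dist y z + dist z x) * (-dist x y + dist y z + dist z x) *
      (dist x y - dist y z + dist z x) * (dist x y + dist y z - dist z x) = 0 := by
      rw [← h']; ring
    linarith

lemma circ_eval : circumradius3 x y z = ENNReal.ofReal (dist x y * dist y z * dist z x /
    Real.sqrt ((dist x y + dist y z + dist z x) * (-dist x y + dist y z + dist z x) *
      (dist x y - dist y z + dist z x) * (dist x y + dist y z - dist z x))) := by
  rw [circumradius3, if_neg (noncol hx hy hz hxy hyz hxz)]

lemma circ_le_one : circumradius3 x y z ≤ 1 := by
  rw [circ_eval hx hy hz hxy hyz hxz]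
  have habc := abc_pos hx hy hz hxy hyz hxz
  have hpos := heron_pos hx hy hz hxy hyz hxz
  have hk := heron_key x y z (normsq3 x hx) (normsq3 y hy) (normsq3 z hz)
  have hs : 0 < Real.sqrt ((dist x y + dist y z + dist z x) * (-dist x y + dist y z + dist z x) *
      (dist x y - dist y z + dist z x) * (dist x y + dist y z - dist z x)) := Real.sqrt_pos.2 hpos
  have hd : dist x y * dist y z * dist z x /
      Real.sqrt ((dist x y + dist y z + dist z x) * (-dist x y + dist y z + dist z x) *
      (dist x y - dist y z + dist z x) * (dist x y + dist y z - dist z x)) ≤ 1 := by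
    rw [div_le_one hs, Real.le_sqrt habc.le, hk]
    · nlinarith [sq_nonneg (trip x y z)]
    · exact hpos.le
  calc ENNReal.ofReal _ ≤ ENNReal.ofReal 1 := ENNReal.ofReal_le_ofReal hd
    _ = 1 := ENNReal.ofReal_one

lemma trip_zero_of_one_le (h : 1 ≤ circumradius3 x y z) : trip x y z = 0 := by
  rw [circ_eval hx hy hz hxy hyz hxz] at h
  have habc := abc_pos hx hy hz hxy hyz hxz
  have hpos := heron_pos hx hy hz hxy hyz hxz
  have hk := heron_key x y z (normsq3 x hx) (normsq3 y hy) (normsq3 z hz)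
  have hs : 0 < Real.sqrt ((dist x y + dist y z + dist z x) * (-dist x y + dist y z + dist z x) *
      (dist x y - dist y z + dist z x) * (dist x y + dist y z - dist z x)) := Real.sqrt_pos.2 hpos
  have h1 : (1:ℝ) ≤ dist x y * dist y z * dist z x /
      Real.sqrt ((dist x y + dist y z + dist z x) * (-dist x y + dist y z + dist z x) *
      (dist x y - dist y z + dist z x) * (dist x y + dist y z - dist z x)) :=
    ENNReal.one_le_ofReal.1 h
  rw [le_div_iff₀ hs, one_mul] at h1
  have h3 := Real.sq_sqrt hpos.le
  have h4 : (trip x y z)^2 ≤ 0 := by nlinarith [hs.le]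
  have h5 := sq_nonneg (trip x y z)
  have h6 : (trip x y z)^2 = 0 := le_antisymm h4 h5
  exact pow_eq_zero_iff (by norm_num) |>.1 h6

lemma circ_eq_one_of_trip (hT : trip x y z = 0) : circumradius3 x y z = 1 := by
  rw [circ_eval hx hy hz hxy hyz hxz]
  have habc := abc_pos hx hy hz hxy hyz hxz
  have hk := heron_key x y z (normsq3 x hx) (normsq3 y hy) (normsq3 z hz)
  rw [hT] at hk
  rw [hk, show (dist x y * dist y z * dist z x)^2 + 4*0^2 =
    (dist x y * dist y z * dist z x)^2 from by ring,
    Real.sqrt_sq habc.le, div_self habc.ne']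
  exact ENNReal.ofReal_one

end main

/-! ### Cross products and Cramer's rule -/

def evec (a b c : ℝ) : E3 := (WithLp.equiv 2 (Fin 3 → ℝ)).symm ![a,b,c]

@[simp] lemma evec_0 (a b c : ℝ) : evec a b c 0 = a := rfl
@[simp] lemma evec_1 (a b c : ℝ) : evec a b c 1 = b := rfl
@[simp] lemma evec_2 (a b c : ℝ) : evec a b c 2 = c := rfl

lemma e3_ext (w : E3) (h0 : w 0 = 0) (h1 : w 1 = 0) (h2 : w 2 = 0) : w = 0 := by
  ext i
  fin_cases i <;> assumption

def cross (x y : E3) : E3 :=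
  evec (x 1 * y 2 - x 2 * y 1) (x 2 * y 0 - x 0 * y 2) (x 0 * y 1 - x 1 * y 0)

lemma inner_cross_left (x y : E3) : ⟪cross x y, x⟫ = 0 := by
  rw [inner3]; simp [cross]; ring

lemma inner_cross_right (x y : E3) : ⟪cross x y, y⟫ = 0 := by
  rw [inner3]; simp [cross]; ring

lemma inner_cross_trip (x y z : E3) : ⟪cross x y, z⟫ = trip x y z := by
  rw [inner3]; simp [cross, trip]; ring

lemma cross_ne_zero {x y : E3} (hx : x 0^2+x 1^2+x 2^2 = 1) (hy : y 0^2+y 1^2+y 2^2 = 1)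
    (hxy : x ≠ y) (hxny : x ≠ -y) : cross x y ≠ 0 := by
  intro h
  have h0 : x 1 * y 2 - x 2 * y 1 = 0 := by rw [← evec_0 (x 1*y 2 - x 2*y 1) _ _, ← cross, h]; rfl
  have h1 : x 2 * y 0 - x 0 * y 2 = 0 := by rw [← evec_1 _ (x 2*y 0 - x 0*y 2) _, ← cross, h]; rfl
  have h2 : x 0 * y 1 - x 1 * y 0 = 0 := by rw [← evec_2 _ _ (x 0*y 1 - x 1*y 0), ← cross, h]; rfl
  set u := x 0*y 0 + x 1*y 1 + x 2*y 2 with hu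
  have hlag : (x 0^2+x 1^2+x 2^2) * (y 0^2+y 1^2+y 2^2) - u^2 = (x 1 * y 2 - x 2 * y 1)^2
      + (x 2 * y 0 - x 0 * y 2)^2 + (x 0 * y 1 - x 1 * y 0)^2 := by
    rw [hu]; ring
  rw [hx, hy, one_mul] at hlag
  have hlag0 : u^2 = 1 := by rw [h0, h1, h2] at hlag; nlinarith [hlag]
  have hd1 : dist x y ^ 2 = 2 - 2*u := by rw [distsq3, hu]; linear_combination hx + hy
  have hd2 : dist x (-y) ^ 2 = 2 + 2*u := by
    rw [distsq3, hu]
    simp only [PiLp.neg_apply]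
    linear_combination hx + hy
  have hp1 : 0 < dist x y := dist_pos.2 hxy
  have hp2 : 0 < dist x (-y) := dist_pos.2 hxny
  nlinarith [hd1, hd2, pow_pos hp1 2, pow_pos hp2 2, hlag0]

lemma orth_triple_zero {x y z w : E3} (hT : trip x y z ≠ 0) (h1 : ⟪x,w⟫ = 0)
    (h2 : ⟪y,w⟫ = 0) (h3 : ⟪z,w⟫ = 0) : w = 0 := by
  rw [inner3] at h1 h2 h3
  apply e3_ext
  · have e0 : trip x y z * w 0 = 0 := by
      unfold trip
      linear_combination (y 1*z 2 - y 2*z 1)*h1 - (x 1*z 2 - x 2*z 1)*h2 + (x 1*y 2 - x 2*y 1)*h3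
    exact (mul_eq_zero.1 e0).resolve_left hT
  · have e1 : trip x y z * w 1 = 0 := by
      unfold trip
      linear_combination (-(y 0*z 2 - y 2*z 0))*h1 + (x 0*z 2 - x 2*z 0)*h2 - (x 0*y 2 - x 2*y 0)*h3
    exact (mul_eq_zero.1 e1).resolve_left hT
  · have e2 : trip x y z * w 2 = 0 := by
      unfold trip
      linear_combination (y 0*z 1 - y 1*z 0)*h1 - (x 0*z 1 - x 1*z 0)*h2 + (x 0*y 1 - x 1*y 0)*h3
    exact (mul_eq_zero.1 e2).resolve_left hT

/-! ### Curve lemmas -/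

section curve
variable {γ : ℝ → E3} (hγ : IsClosedSphericalCurve γ)

lemma curve_hasDerivAt (t : ℝ) (hcd : ContDiff ℝ 1 γ) : HasDerivAt γ (deriv γ t) t :=
  ((hcd.differentiable one_ne_zero) t).hasDerivAt

include hγ

lemma curve_unit (t : ℝ) : ‖γ t‖ = 1 := by
  have := hγ.2.2.2 (mem_range_self t)
  simpa using this

lemma curve_inner_deriv (p : E3) (t : ℝ) :
    HasDerivAt (fun s => ⟪p, γ s⟫) ⟪p, deriv γ t⟫ t := by
  have h := (hasDerivAt_const t p).inner ℝ (curve_hasDerivAt t hγ.2.1)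
  simpa using h

lemma curve_tangent (t : ℝ) : ⟪γ t, deriv γ t⟫ = 0 := by
  have h := (curve_hasDerivAt t hγ.2.1).inner ℝ (curve_hasDerivAt t hγ.2.1)
  have hconst : (fun s => ⟪γ s, γ s⟫) = fun _ : ℝ => (1:ℝ) := by
    funext s
    rw [real_inner_self_eq_norm_mul_norm, curve_unit hγ s]; norm_num
  rw [hconst] at h
  have h0 := h.unique (hasDerivAt_const t (1:ℝ))
  have := real_inner_comm (γ t) (deriv γ t)
  linarith [h0, this]

lemma curve_const_inner {p : E3} {c : ℝ} (hc : ∀ s, ⟪p, γ s⟫ = c) (t : ℝ) :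
    ⟪p, deriv γ t⟫ = 0 := by
  have h := curve_inner_deriv hγ p t
  have hconst : (fun s => ⟪p, γ s⟫) = fun _ : ℝ => c := funext hc
  rw [hconst] at h
  exact h.unique (hasDerivAt_const t c)

lemma circle_subset_range {v : E3} (hv : v ≠ 0)
    (hsub : range γ ⊆ {x ∈ sphere (0:E3) 1 | ⟪v,x⟫ = 0}) :
    {x ∈ sphere (0:E3) 1 | ⟪v,x⟫ = 0} ⊆ range γ := by
  intro p hp
  by_contra hpr
  obtain ⟨hps, hpv⟩ := hp
  have hpn : ‖p‖ = 1 := by simpa using hps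
  set f : ℝ → ℝ := fun t => ⟪p, γ t⟫ with hf
  have hcont : Continuous f := by
    apply Continuous.inner continuous_const hγ.2.1.continuous
  have h2pi : (0:ℝ) < 2 * π := by positivity
  obtain ⟨t₀, ht₀, hmax⟩ := (isCompact_Icc (a := (0:ℝ)) (b := 2*π)).exists_isMaxOn
    (nonempty_Icc.2 h2pi.le) hcont.continuousOn
  have hperf : Periodic f (2*π) := fun t => by simp [hf, hγ.1 t]
  have hglob : ∀ t, f t ≤ f t₀ := by
    intro t
    obtain ⟨s, hs, hfs⟩ := hperf.exists_mem_Ico₀ h2pi t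
    rw [hfs]
    exact hmax (Ico_subset_Icc_self hs)
  have hloc : IsLocalMax f t₀ := Filter.Eventually.of_forall hglob
  have hd0 : deriv f t₀ = 0 := hloc.deriv_eq_zero
  have hpd : ⟪p, deriv γ t₀⟫ = 0 := by
    rw [← (curve_inner_deriv hγ p t₀).deriv]; exact hd0
  set q := γ t₀ with hq
  have hqmem : q ∈ range γ := mem_range_self t₀
  have hqn : ‖q‖ = 1 := curve_unit hγ t₀
  have hqv : ⟪v, q⟫ = 0 := (hsub hqmem).2
  have hpq : p ≠ q := fun h => hpr (h ▸ hqmem)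
  have hpnq : p ≠ -q := by
    intro h
    have hone : ∀ t, γ t = -p := by
      intro t
      have hle : f t ≤ f t₀ := hglob t
      have ht0 : f t₀ = -1 := by
        rw [hf]; simp only [hq]
        rw [h]
        rw [inner_neg_left, real_inner_self_eq_norm_mul_norm, hqn]; norm_num
      have hge : -1 ≤ f t := by
        have := abs_real_inner_le_norm p (γ t)
        rw [hpn, curve_unit hγ t, one_mul] at this
        exact (abs_le.1 this).1
      have hft : f t = -1 := le_antisymm (ht0 ▸ hle) hge
      have h1 : ⟪-p, γ t⟫ = 1 := by rw [inner_neg_left]; rw [hf] at hft; linarith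
      have hnp : ‖-p‖ = 1 := by rw [norm_neg]; exact hpn
      exact ((inner_eq_one_iff_of_norm_eq_one hnp (curve_unit hγ t)).1 h1).symm
    have hγc : γ = fun _ => -p := funext hone
    have : deriv γ t₀ = 0 := by rw [hγc]; exact deriv_const t₀ (-p)
    exact hγ.2.2.1 t₀ this
  set v' : E3 := ‖v‖⁻¹ • v with hv'
  have hv'n : ‖v'‖ = 1 := norm_smul_inv_norm hv
  have hv'p : ⟪v', p⟫ = 0 := by rw [hv', real_inner_smul_left, hpv, mul_zero]
  have hv'q : ⟪v', q⟫ = 0 := by rw [hv', real_inner_smul_left, hqv, mul_zero]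
  have hg := gram_sq v' p q (normsq3' v' hv'n) (normsq3' p hpn) (normsq3' q hqn)
  rw [← inner3 v' p, ← inner3 p q, ← inner3 v' q, hv'p, hv'q] at hg
  set s := ⟪p, q⟫ with hs
  have hs1 : s ≠ 1 := by
    intro h
    exact hpq ((inner_eq_one_iff_of_norm_eq_one hpn hqn).1 (hs ▸ h))
  have hsm1 : s ≠ -1 := by
    intro h
    apply hpnq
    have h1 : ⟪p, -q⟫ = 1 := by rw [inner_neg_right]; rw [← hs, h]; ring
    have hnq : ‖-q‖ = 1 := by rw [norm_neg]; exact hqn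
    exact (inner_eq_one_iff_of_norm_eq_one hpn hnq).1 h1
  have hsabs : |s| ≤ 1 := by
    have := abs_real_inner_le_norm p q
    rwa [hpn, hqn, one_mul] at this
  have hs2 : s^2 < 1 := by
    rcases lt_or_eq_of_le ((sq_le_one_iff_abs_le_one _).2 hsabs) with h | h
    · exact h
    · exfalso
      have h1 : (s - 1) * (s + 1) = 0 := by linear_combination h
      rcases mul_eq_zero.1 h1 with h' | h'
      · exact hs1 (by linarith)
      · exact hsm1 (by linarith)
  have hT : trip v' p q ≠ 0 := by
    intro h
    rw [h] at hg
    nlinarith [hg, hs2]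
  have hw1 : ⟪v', deriv γ t₀⟫ = 0 := by
    rw [hv', real_inner_smul_left]
    rw [curve_const_inner hγ (fun s => (hsub (mem_range_self s)).2) t₀, mul_zero]
  have hw2 : ⟪q, deriv γ t₀⟫ = 0 := curve_tangent hγ t₀
  have := orth_triple_zero hT hw1 hpd hw2
  exact hγ.2.2.1 t₀ this

lemma range_infinite : (range γ).Infinite := by
  have hnc : ∃ t₁, γ t₁ ≠ γ 0 := by
    by_contra h
    push_neg at h
    have h1 : γ = fun _ => γ 0 := funext h
    have : deriv γ 0 = 0 := by rw [h1]; exact deriv_const 0 (γ 0)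
    exact hγ.2.2.1 0 this
  obtain ⟨t₁, ht₁⟩ := hnc
  set d : E3 := γ t₁ - γ 0 with hd
  have hdne : d ≠ 0 := sub_ne_zero.2 ht₁
  set g : ℝ → ℝ := fun t => ⟪d, γ t⟫ with hg
  have hcont : Continuous g := Continuous.inner continuous_const hγ.2.1.continuous
  have hlt : g 0 < g t₁ := by
    have h1 : g t₁ - g 0 = ‖d‖^2 := by
      rw [hg]; simp only
      rw [← inner_sub_right, ← hd, real_inner_self_eq_norm_sq]
    have h2 : 0 < ‖d‖ := norm_pos_iff.2 hdne
    nlinarith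
  have hIcc : Icc (g 0) (g t₁) ⊆ range g := intermediate_value_univ 0 t₁ hcont
  have hginf : (range g).Infinite := Set.Infinite.mono hIcc (Set.Icc_infinite hlt)
  have himg : range g ⊆ (fun x : E3 => ⟪d, x⟫) '' (range γ) := by
    rintro r ⟨t, rfl⟩
    exact ⟨γ t, mem_range_self t, rfl⟩
  exact Set.Infinite.of_image _ (hginf.mono himg)

lemma exists_three_points :
    ∃ x ∈ range γ, ∃ y ∈ range γ, ∃ z ∈ range γ, x ≠ y ∧ y ≠ z ∧ x ≠ z := by
  have hinf := range_infinite hγ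
  obtain ⟨x, hx, y, hy, hxy⟩ := hinf.nontrivial
  have h1 : (range γ \ {x, y}).Nonempty := (hinf.diff ((Set.finite_singleton y).insert x)).nonempty
  obtain ⟨z, hz⟩ := h1
  refine ⟨x, hx, y, hy, z, hz.1, hxy, ?_, ?_⟩
  · intro h; exact hz.2 (by simp [h])
  · intro h; exact hz.2 (by simp [← h])

lemma exists_nonantipodal :
    ∃ x ∈ range γ, ∃ y ∈ range γ, x ≠ y ∧ x ≠ -y := by
  have hinf := range_infinite hγ
  obtain ⟨x, hx⟩ := hinf.nonempty
  have h1 : (range γ \ {x, -x}).Nonempty :=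
    (hinf.diff ((Set.finite_singleton (-x)).insert x)).nonempty
  obtain ⟨y, hy⟩ := h1
  refine ⟨x, hx, y, hy.1, ?_, ?_⟩
  · intro h; exact hy.2 (by simp [← h])
  · intro h; apply hy.2; right; simp only [mem_singleton_iff]; rw [h]; simp

end curve

/-! ### Parts 1 and 2 -/

lemma part1 (Θ : ℝ) (hΘ : 1 < Θ) :
    ¬ ∃ γ : ℝ → E3, IsClosedSphericalCurve γ ∧ ENNReal.ofReal Θ ≤ thickness (range γ) := by
  rintro ⟨γ, hγ, hth⟩
  obtain ⟨x, hx, y, hy, z, hz, hxy, hyz, hxz⟩ := exists_three_points hγ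
  have hxs := hγ.2.2.2 hx
  have hys := hγ.2.2.2 hy
  have hzs := hγ.2.2.2 hz
  have hmem : circumradius3 x y z ∈ {r | ∃ x ∈ range γ, ∃ y ∈ range γ, ∃ z ∈ range γ,
      x ≠ y ∧ y ≠ z ∧ x ≠ z ∧ r = circumradius3 x y z} :=
    ⟨x, hx, y, hy, z, hz, hxy, hyz, hxz, rfl⟩
  have h1 : thickness (range γ) ≤ circumradius3 x y z := sInf_le hmem
  have h2 : circumradius3 x y z ≤ 1 := circ_le_one hxs hys hzs hxy hyz hxz
  have h3 : (1:ENNReal) < ENNReal.ofReal Θ := ENNReal.one_lt_ofReal.2 hΘ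
  exact absurd (le_trans hth (le_trans h1 h2)) (not_le.2 h3)

lemma part2 (γ : ℝ → E3) (hγ : IsClosedSphericalCurve γ) :
    1 ≤ thickness (range γ) ↔
      ∃ v : E3, v ≠ 0 ∧ range γ = {x ∈ sphere (0 : E3) 1 | ⟪v, x⟫ = 0} := by
  constructor
  · intro h
    obtain ⟨x, hx, y, hy, hxy, hxny⟩ := exists_nonantipodal hγ
    have hxs := hγ.2.2.2 hx
    have hys := hγ.2.2.2 hy
    set v := cross x y with hv
    have hvne : v ≠ 0 := cross_ne_zero (normsq3 x hxs) (normsq3 y hys) hxy hxny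
    refine ⟨v, hvne, ?_⟩
    have hsub : range γ ⊆ {w ∈ sphere (0:E3) 1 | ⟪v,w⟫ = 0} := by
      intro z hz
      refine ⟨hγ.2.2.2 hz, ?_⟩
      rcases eq_or_ne z x with hzx | hzx
      · rw [hzx, hv]; exact inner_cross_left x y
      rcases eq_or_ne z y with hzy | hzy
      · rw [hzy, hv]; exact inner_cross_right x y
      have hzs := hγ.2.2.2 hz
      have hcmem : circumradius3 x y z ∈ {r | ∃ x ∈ range γ, ∃ y ∈ range γ, ∃ z ∈ range γ,
          x ≠ y ∧ y ≠ z ∧ x ≠ z ∧ r = circumradius3 x y z} :=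
        ⟨x, hx, y, hy, z, hz, hxy, Ne.symm hzy, Ne.symm hzx, rfl⟩
      have h1 : (1:ENNReal) ≤ circumradius3 x y z := le_trans h (sInf_le hcmem)
      have hT := trip_zero_of_one_le hxs hys hzs hxy (Ne.symm hzy) (Ne.symm hzx) h1
      rw [inner_cross_trip]
      exact hT
    exact Subset.antisymm hsub (circle_subset_range hγ hvne hsub)
  · rintro ⟨v, hv, hrange⟩
    apply le_sInf
    rintro r ⟨x, hx, y, hy, z, hz, hxy, hyz, hxz, rfl⟩
    rw [hrange] at hx hy hz
    have hT : trip x y z = 0 := by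
      by_contra hT
      apply hv
      apply orth_triple_zero hT
      · rw [real_inner_comm]; exact hx.2
      · rw [real_inner_comm]; exact hy.2
      · rw [real_inner_comm]; exact hz.2
    rw [circ_eq_one_of_trip hx.1 hy.1 hz.1 hxy hyz hxz hT]

open Filter Topology

def stdcirc : ℝ → E3 := fun t => evec (cos t) (sin t) 0

lemma exists_cos_sin {α β : ℝ} (h : α^2 + β^2 = 1) :
    ∃ t ∈ Icc (-π) π, cos t = α ∧ sin t = β := by
  set z : ℂ := ⟨α, β⟩ with hz
  have habs : ‖z‖ = 1 := by
    rw [Complex.norm_def, Complex.normSq_mk]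
    rw [show α * α + β * β = 1 by nlinarith]
    exact Real.sqrt_one
  have hzne : z ≠ 0 := by
    intro h0
    rw [h0] at habs
    simp at habs
  refine ⟨Complex.arg z, ?_, ?_, ?_⟩
  · have := Complex.arg_mem_Ioc z
    exact ⟨this.1.le, this.2⟩
  · rw [Complex.cos_arg hzne, habs]; simp [hz]
  · rw [Complex.sin_arg, habs]; simp [hz]

lemma stdcirc_norm (t : ℝ) : ‖stdcirc t‖ = 1 := by
  rw [EuclideanSpace.norm_eq]
  have h1 : ∑ i : Fin 3, ‖stdcirc t i‖^2 = 1 := by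
    rw [Fin.sum_univ_three]
    show ‖(evec (cos t) (sin t) 0) 0‖^2 + ‖(evec (cos t) (sin t) 0) 1‖^2
      + ‖(evec (cos t) (sin t) 0) 2‖^2 = 1
    rw [evec_0, evec_1, evec_2]
    simp only [Real.norm_eq_abs, sq_abs]
    rw [cos_sq_add_sin_sq t]
    norm_num
  rw [h1]
  exact Real.sqrt_one

lemma stdcirc_hasDeriv (t : ℝ) : HasDerivAt stdcirc (evec (-sin t) (cos t) 0) t := by
  have hpi : HasDerivAt (fun s : ℝ => (![cos s, sin s, 0] : Fin 3 → ℝ))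
      ![-sin t, cos t, 0] t := by
    rw [hasDerivAt_pi]
    intro i
    fin_cases i
    · simpa using Real.hasDerivAt_cos t
    · simpa using Real.hasDerivAt_sin t
    · simpa using hasDerivAt_const t (0:ℝ)
  have hL := ((PiLp.continuousLinearEquiv 2 ℝ (fun _ : Fin 3 => ℝ)).symm :
      (Fin 3 → ℝ) →L[ℝ] E3).hasFDerivAt.comp_hasDerivAt t hpi
  exact hL

lemma stdcirc_deriv (t : ℝ) : deriv stdcirc t = evec (-sin t) (cos t) 0 :=
  (stdcirc_hasDeriv t).deriv

lemma stdcirc_curve : IsClosedSphericalCurve stdcirc := by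
  refine ⟨?_, ?_, ?_, ?_⟩
  · intro t
    unfold stdcirc evec
    rw [Real.cos_add_two_pi, Real.sin_add_two_pi]
  · have : stdcirc = (PiLp.continuousLinearEquiv 2 ℝ (fun _ : Fin 3 => ℝ)).symm ∘
        (fun t : ℝ => (![cos t, sin t, 0] : Fin 3 → ℝ)) := rfl
    rw [this]
    apply ContDiff.comp
    · exact (PiLp.continuousLinearEquiv 2 ℝ (fun _ : Fin 3 => ℝ)).symm.contDiff
    · apply contDiff_pi.2
      intro i
      fin_cases i
      · simpa using Real.contDiff_cos
      · simpa using Real.contDiff_sin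
      · simpa using contDiff_const (c := (0:ℝ))
  · intro t h
    rw [stdcirc_deriv t] at h
    have h0 : -sin t = 0 := by rw [← evec_0 (-sin t) (cos t) 0, h]; rfl
    have h1 : cos t = 0 := by rw [← evec_1 (-sin t) (cos t) 0, h]; rfl
    nlinarith [sin_sq_add_cos_sq t, h0, h1]
  · rintro x ⟨t, rfl⟩
    simpa using stdcirc_norm t

def e3 : E3 := evec 0 0 1

lemma stdcirc_range : range stdcirc = {x ∈ sphere (0:E3) 1 | ⟪e3, x⟫ = 0} := by
  apply Subset.antisymm
  · rintro x ⟨t, rfl⟩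
    constructor
    · simpa using stdcirc_norm t
    · rw [inner3]; simp [e3, stdcirc]
  · rintro x ⟨hxs, hxv⟩
    have hxn : ‖x‖ = 1 := by simpa using hxs
    have hx2 : x 2 = 0 := by
      rw [inner3] at hxv; simpa [e3] using hxv
    have hsq := normsq3' x hxn
    rw [hx2] at hsq
    obtain ⟨t, _, hc, hs⟩ := exists_cos_sin (by linarith : (x 0)^2 + (x 1)^2 = 1)
    refine ⟨t, ?_⟩
    have : stdcirc t - x = 0 := by
      apply e3_ext <;> simp [stdcirc, PiLp.sub_apply, hc, hs, hx2]
    have := sub_eq_zero.1 this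
    exact this

lemma stdcirc_per : Periodic stdcirc (2 * π) := stdcirc_curve.1
lemma stdcirc_cont : Continuous stdcirc := stdcirc_curve.2.1.continuous

lemma stdcirc_distsq (s t : ℝ) :
    dist (stdcirc s) (stdcirc t) ^ 2 = 2 - 2 * Real.cos (s - t) := by
  rw [distsq3]
  show (cos s - cos t)^2 + (sin s - sin t)^2 + (0 - 0 : ℝ)^2 = 2 - 2*Real.cos (s - t)
  rw [Real.cos_sub]
  nlinarith [Real.sin_sq_add_cos_sq s, Real.sin_sq_add_cos_sq t]

lemma stdcirc_dist (s t : ℝ) :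
    dist (stdcirc s) (stdcirc t) = 2 * |Real.sin ((s - t)/2)| := by
  have h := stdcirc_distsq s t
  have hsq := Real.sin_sq_eq_half_sub ((s - t)/2)
  rw [show 2*((s-t)/2) = s - t by ring] at hsq
  have h2 : (2 * |Real.sin ((s - t)/2)|)^2 = 2 - 2 * Real.cos (s - t) := by
    rw [mul_pow, sq_abs]
    nlinarith [hsq]
  nlinarith [dist_nonneg (x := stdcirc s) (y := stdcirc t),
    abs_nonneg (Real.sin ((s - t)/2)), h, h2]

lemma stdcirc_lip : LipschitzWith 1 stdcirc := by
  apply LipschitzWith.of_dist_le_mul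
  intro s t
  rw [stdcirc_dist, NNReal.coe_one, one_mul, Real.dist_eq]
  calc 2 * |Real.sin ((s - t)/2)| ≤ 2 * |(s - t)/2| := by
        have := Real.abs_sin_le_abs (x := (s - t)/2)
        linarith
    _ = |s - t| := by rw [abs_div, abs_two]; ring

lemma stdcirc_inj {s t : ℝ} (h : |s - t| < 2*π) (he : stdcirc s = stdcirc t) : s = t := by
  have hd : dist (stdcirc s) (stdcirc t) = 0 := by rw [he, dist_self]
  have h1 := stdcirc_distsq s t
  rw [hd] at h1
  have hcos : Real.cos (s - t) = 1 := by nlinarith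
  obtain ⟨hl, hr⟩ := abs_lt.1 h
  have := (Real.cos_eq_one_iff_of_lt_of_lt (by linarith) (by linarith)).1 hcos
  linarith

lemma stdcirc_injOn {a b : ℝ} (hab : b - a ≤ 2*π) : InjOn stdcirc (Ico a b) := by
  intro s hs t ht he
  apply stdcirc_inj _ he
  rw [abs_sub_lt_iff]
  obtain ⟨hs1, hs2⟩ := hs
  obtain ⟨ht1, ht2⟩ := ht
  constructor <;> linarith

lemma abs_sin_eq {u : ℝ} (h : |u| ≤ π) : |Real.sin u| = Real.sin |u| := by
  rcases le_or_gt 0 u with h' | h'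
  · rw [abs_of_nonneg h', abs_of_nonneg (Real.sin_nonneg_of_nonneg_of_le_pi h'
      (by rwa [abs_of_nonneg h'] at h))]
  · have h1 : 0 ≤ Real.sin (-u) := Real.sin_nonneg_of_nonneg_of_le_pi (by linarith)
      (by rwa [abs_of_neg h'] at h)
    rw [Real.sin_neg] at h1
    rw [abs_of_neg h', abs_of_nonpos (by linarith), Real.sin_neg]

lemma sin_lower_concave {θ c : ℝ} (hθ0 : 0 ≤ θ) (hθc : θ ≤ c) (hc0 : 0 < c) (hcπ : c ≤ π) :
    (θ / c) * Real.sin c ≤ Real.sin θ := by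
  have hmem0 : (0:ℝ) ∈ Icc (0:ℝ) π := ⟨le_refl 0, Real.pi_pos.le⟩
  have hmemc : c ∈ Icc (0:ℝ) π := ⟨hc0.le, hcπ⟩
  have ha : (0:ℝ) ≤ 1 - θ/c := by
    rw [sub_nonneg, div_le_one hc0]; exact hθc
  have hb : (0:ℝ) ≤ θ/c := by positivity
  have hsum : (1 - θ/c) + θ/c = 1 := by ring
  have hcon := strictConcaveOn_sin_Icc.concaveOn.2 hmem0 hmemc ha hb hsum
  rw [smul_eq_mul, smul_eq_mul, smul_eq_mul, smul_eq_mul, Real.sin_zero] at hcon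
  have harg : (1 - θ/c) * 0 + θ/c * c = θ := by field_simp; ring
  rw [harg] at hcon
  linarith

lemma arc_lower {n : ℕ} (hn : 2 ≤ n) (a : ℝ) :
    ENNReal.ofReal (2 * Real.sin (π/n)) ≤ μH[1] (stdcirc '' Ico a (a + 2*π/n)) := by
  have hnpos : (0:ℝ) < n := by positivity
  have hn2 : (2:ℝ) ≤ n := by exact_mod_cast hn
  set c : ℝ := π / n with hc
  have hc0 : 0 < c := by positivity
  have hcπ : c ≤ π/2 := by
    rw [hc, div_le_div_iff₀ hnpos two_pos]
    nlinarith [Real.pi_pos]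
  have hsinc : 0 < Real.sin c := Real.sin_pos_of_pos_of_lt_pi hc0
    (lt_of_le_of_lt hcπ (by linarith [Real.pi_pos]))
  set K : ℝ := c / Real.sin c with hK
  have hK0 : 0 < K := by positivity
  have hinj : InjOn stdcirc (Ico a (a + 2*π/n)) := by
    apply stdcirc_injOn
    rw [show a + 2*π/n - a = 2*c by rw [hc]; ring]
    nlinarith [Real.pi_pos]
  set A : Set E3 := stdcirc '' Ico a (a + 2*π/n) with hA
  set g : E3 → ℝ := invFunOn stdcirc (Ico a (a + 2*π/n)) with hg
  have hglip : LipschitzOnWith K.toNNReal g A := by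
    rw [lipschitzOnWith_iff_dist_le_mul]
    rintro x ⟨s, hs, rfl⟩ y ⟨t, ht, rfl⟩
    rw [hg, hinj.leftInvOn_invFunOn hs, hinj.leftInvOn_invFunOn ht]
    rw [Real.dist_eq, stdcirc_dist, Real.coe_toNNReal _ hK0.le]
    set θ : ℝ := |s - t| / 2 with hθ
    have h2c : 2*c = 2*π/n := by rw [hc]; ring
    have hθ0 : 0 ≤ θ := by positivity
    have hθc : θ ≤ c := by
      obtain ⟨hs1, hs2⟩ := hs
      obtain ⟨ht1, ht2⟩ := ht
      have habs : |s - t| ≤ 2*c := by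
        rw [abs_sub_le_iff]
        constructor <;> linarith
      rw [hθ, div_le_iff₀ two_pos]
      linarith
    have hcπ' : c ≤ π := by linarith [Real.pi_pos]
    have habs2 : |(s - t)/2| = θ := by rw [hθ, abs_div, abs_two]
    have habs : |Real.sin ((s - t)/2)| = Real.sin θ := by
      rw [abs_sin_eq (by rw [habs2]; linarith), habs2]
    rw [habs]
    have hconc := sin_lower_concave hθ0 hθc hc0 hcπ'
    have h2θ : |s - t| = 2*θ := by rw [hθ]; ring
    rw [h2θ, hK, div_mul_eq_mul_div, le_div_iff₀ hsinc]
    have hcc : θ / c * Real.sin c * c = θ * Real.sin c := by field_simp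
    nlinarith [hconc, hc0, hsinc]
  have hIm : Ico a (a + 2*π/n) ⊆ g '' A := by
    intro s hs
    exact ⟨stdcirc s, mem_image_of_mem _ hs, hinj.leftInvOn_invFunOn hs⟩
  have h1 : ENNReal.ofReal (2*π/n) ≤ μH[1] (g '' A) := by
    have he : ENNReal.ofReal (2*π/n) = μH[1] (Ico a (a + 2*π/n)) := by
      rw [MeasureTheory.hausdorffMeasure_real, Real.volume_Ico]
      congr 1
      ring
    rw [he]
    exact measure_mono hIm
  have h2 : μH[1] (g '' A) ≤ (K.toNNReal : ENNReal) ^ (1:ℝ) * μH[1] A :=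
    hglip.hausdorffMeasure_image_le zero_le_one
  rw [ENNReal.rpow_one] at h2
  have hcoe : (K.toNNReal : ENNReal) = ENNReal.ofReal K := rfl
  rw [hcoe] at h2
  have hm : ENNReal.ofReal (2 * Real.sin c) * ENNReal.ofReal K = ENNReal.ofReal (2*π/n) := by
    rw [← ENNReal.ofReal_mul (by positivity)]
    congr 1
    rw [hK, hc]
    field_simp
    ring_nf
    exact mul_inv_cancel₀ (by rw [hc] at hsinc; rw [← div_eq_mul_inv]; exact hsinc.ne')
  have hKne : ENNReal.ofReal K ≠ 0 := (ENNReal.ofReal_pos.2 hK0).ne'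
  refine (ENNReal.mul_le_mul_iff_left hKne ENNReal.ofReal_ne_top).1 ?_
  rw [hm]
  calc ENNReal.ofReal (2*π/n) ≤ ENNReal.ofReal K * μH[1] A := le_trans h1 h2
    _ = μH[1] A * ENNReal.ofReal K := mul_comm _ _
lemma meas_arc {a b : ℝ} (hab : a ≤ b) (hlt : b - a < 2*π) :
    MeasurableSet (stdcirc '' Ico a b) := by
  have him : stdcirc '' Ico a b = stdcirc '' Icc a b \ {stdcirc b} := by
    apply Subset.antisymm
    · rintro u ⟨s, hs, rfl⟩
      refine ⟨⟨s, ⟨hs.1, hs.2.le⟩, rfl⟩, ?_⟩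
      simp only [mem_singleton_iff]
      intro he
      have := stdcirc_inj (by rw [abs_sub_lt_iff]; constructor <;> [linarith [hs.1, hs.2]; linarith [hs.1, hs.2]]) he
      linarith [hs.2]
    · rintro u ⟨⟨s, hs, rfl⟩, hne⟩
      simp only [mem_singleton_iff] at hne
      exact ⟨s, ⟨hs.1, lt_of_le_of_ne hs.2 (fun h => hne (by rw [h]))⟩, rfl⟩
  rw [him]
  exact ((isCompact_Icc.image stdcirc_cont).measurableSet).diff (measurableSet_singleton _)

lemma lower_bound {n : ℕ} (hn : 2 ≤ n) :
    ENNReal.ofReal ((n:ℝ) * (2 * Real.sin (π/n))) ≤ μH[1] (range stdcirc) := by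
  have hnpos : (0:ℝ) < n := by positivity
  set A : ℕ → Set E3 := fun k => stdcirc '' Ico (2*π*k/n) (2*π*k/n + 2*π/n) with hA
  have hsub : ∀ k, A k ⊆ range stdcirc := by
    rintro k u ⟨s, _, rfl⟩; exact mem_range_self s
  have hrange : ∀ k : ℕ, k < n → ∀ s ∈ Ico (2*π*(k:ℝ)/n) (2*π*k/n + 2*π/n),
      0 ≤ s ∧ s < 2*π := by
    intro k hk s hs
    obtain ⟨h1, h2⟩ := hs
    have hk' : (k:ℝ) ≤ (n:ℝ) - 1 := by
      have : (k:ℝ) + 1 ≤ n := by exact_mod_cast hk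
      linarith
    constructor
    · have : 0 ≤ 2*π*(k:ℝ)/n := by positivity
      linarith
    · have : 2*π*(k:ℝ)/n + 2*π/n ≤ 2*π := by
        rw [← add_div, div_le_iff₀ hnpos]
        nlinarith [Real.pi_pos]
      linarith
  have hdisj : (↑(Finset.range n) : Set ℕ).PairwiseDisjoint A := by
    intro j hj k hk hjk
    simp only [Finset.coe_range, mem_Iio] at hj hk
    rw [Function.onFun, Set.disjoint_left]
    rintro u ⟨s, hs, rfl⟩ ⟨t, ht, he⟩
    have hs' := hrange j hj s hs
    have ht' := hrange k hk t ht
    have hst : s = t := stdcirc_inj (by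
      rw [abs_sub_lt_iff]
      constructor <;> linarith [hs'.1, hs'.2, ht'.1, ht'.2]) he.symm
    apply hjk
    subst hst
    obtain ⟨hj1, hj2⟩ := hs
    obtain ⟨hk1, hk2⟩ := ht
    have hD : (0:ℝ) < 2*π/n := by positivity
    have ej : 2*π*(j:ℝ)/n = (j:ℝ)*(2*π/n) := by ring
    have ek : 2*π*(k:ℝ)/n = (k:ℝ)*(2*π/n) := by ring
    rw [ej] at hj1 hj2
    rw [ek] at hk1 hk2
    have h1 : (j:ℝ) < (k:ℝ) + 1 := by nlinarith
    have h2 : (k:ℝ) < (j:ℝ) + 1 := by nlinarith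
    have h1' : j < k + 1 := by exact_mod_cast h1
    have h2' : k < j + 1 := by exact_mod_cast h2
    omega
  have hmeas : ∀ k ∈ Finset.range n, MeasurableSet (A k) := by
    intro k _
    apply meas_arc
    · have : (0:ℝ) ≤ 2*π/n := by positivity
      linarith
    · have h1 : 2*π*(k:ℝ)/n + 2*π/n - 2*π*(k:ℝ)/n = 2*π/n := by ring
      rw [h1]
      rw [div_lt_iff₀ hnpos]
      have hn2 : (2:ℝ) ≤ n := by exact_mod_cast hn
      nlinarith [Real.pi_pos]
  calc ENNReal.ofReal ((n:ℝ) * (2 * Real.sin (π/n)))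
      = ∑ _k ∈ Finset.range n, ENNReal.ofReal (2 * Real.sin (π/n)) := by
        rw [Finset.sum_const, Finset.card_range, nsmul_eq_mul,
          ← ENNReal.ofReal_natCast n, ← ENNReal.ofReal_mul (Nat.cast_nonneg n)]
    _ ≤ ∑ k ∈ Finset.range n, μH[1] (A k) :=
        Finset.sum_le_sum (fun k _ => arc_lower hn _)
    _ = μH[1] (⋃ k ∈ Finset.range n, A k) := (measure_biUnion_finset hdisj hmeas).symm
    _ ≤ μH[1] (range stdcirc) := measure_mono (iUnion₂_subset (fun k _ => hsub k))

lemma upper_bound : μH[1] (range stdcirc) ≤ ENNReal.ofReal (2*π) := by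
  have hcov : range stdcirc ⊆ stdcirc '' Icc 0 (2*π) := by
    rintro u ⟨t, rfl⟩
    obtain ⟨s, hs, he⟩ := stdcirc_per.exists_mem_Ico₀ (by positivity) t
    exact ⟨s, Ico_subset_Icc_self hs, he.symm⟩
  calc μH[1] (range stdcirc) ≤ μH[1] (stdcirc '' Icc 0 (2*π)) := measure_mono hcov
    _ ≤ ((1:NNReal) : ENNReal) ^ (1:ℝ) * μH[1] (Icc (0:ℝ) (2*π)) :=
        stdcirc_lip.hausdorffMeasure_image_le zero_le_one _
    _ = ENNReal.ofReal (2*π) := by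
        rw [ENNReal.coe_one, ENNReal.one_rpow, one_mul,
          MeasureTheory.hausdorffMeasure_real, Real.volume_Icc]
        norm_num

lemma tendsto_seq :
    Tendsto (fun n : ℕ => (n:ℝ) * (2 * Real.sin (π/n))) atTop (𝓝 (2*π)) := by
  have hd := Real.hasDerivAt_sin 0
  rw [Real.cos_zero] at hd
  have hslope := hasDerivAt_iff_tendsto_slope.1 hd
  have hπn : Tendsto (fun n : ℕ => π/(n:ℝ)) atTop (𝓝[≠] (0:ℝ)) := by
    apply tendsto_nhdsWithin_of_tendsto_nhds_of_eventually_within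
    · exact tendsto_const_div_atTop_nhds_zero_nat π
    · filter_upwards [Filter.eventually_ge_atTop 1] with n hn
      have hn0 : (0:ℝ) < n := by exact_mod_cast hn
      have : π/(n:ℝ) ≠ 0 := by positivity
      simpa using this
  have hcomp := hslope.comp hπn
  have hmul := Filter.Tendsto.mul (tendsto_const_nhds (x := (2*π : ℝ))) hcomp
  rw [mul_one] at hmul
  apply Filter.Tendsto.congr' _ hmul
  filter_upwards [Filter.eventually_ge_atTop 1] with n hn
  have hn0 : (0:ℝ) < n := by exact_mod_cast hn
  show 2*π * (slope Real.sin 0 (π/(n:ℝ))) = (n:ℝ) * (2 * Real.sin (π/n))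
  rw [slope_def_field]
  rw [Real.sin_zero]
  field_simp
  ring

lemma stdcirc_measure : μH[1] (range stdcirc) = ENNReal.ofReal (2*π) := by
  refine le_antisymm upper_bound ?_
  have hlim : Tendsto (fun n : ℕ => ENNReal.ofReal ((n:ℝ) * (2 * Real.sin (π/n)))) atTop
      (𝓝 (ENNReal.ofReal (2*π))) := ENNReal.tendsto_ofReal tendsto_seq
  apply le_of_tendsto hlim
  filter_upwards [Filter.eventually_ge_atTop 2] with n hn
  exact lower_bound hn
lemma two_sub_cos_le (u : ℝ) : 2 - 2*Real.cos u ≤ u^2 := by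
  have hsq := Real.sin_sq_eq_half_sub (u/2)
  rw [show 2*(u/2) = u by ring] at hsq
  have hle := Real.sin_sq_le_sq (x := u/2)
  nlinarith

lemma circle_le {v : E3} (hv : v ≠ 0) :
    μH[1] {x ∈ sphere (0:E3) 1 | ⟪v, x⟫ = 0} ≤ ENNReal.ofReal (2*π) := by
  haveI : Fact (Module.finrank ℝ E3 = 2 + 1) := ⟨by simp⟩
  set K := (ℝ ∙ v)ᗮ with hKdef
  set b := OrthonormalBasis.fromOrthogonalSpanSingleton (𝕜 := ℝ) 2 hv with hb
  set a₀ : E3 := (b 0 : E3) with ha₀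
  set a₁ : E3 := (b 1 : E3) with ha₁
  have hn0 : ‖a₀‖ = 1 := by
    rw [ha₀]
    exact b.orthonormal.1 0
  have hn1 : ‖a₁‖ = 1 := by
    rw [ha₁]
    exact b.orthonormal.1 1
  have h01 : ⟪a₀, a₁⟫ = 0 := by
    have := b.orthonormal.2 (by decide : (0 : Fin 2) ≠ 1)
    rw [ha₀, ha₁]
    exact_mod_cast this
  set δ : ℝ → E3 := fun t => cos t • a₀ + sin t • a₁ with hδ
  have hδdist : ∀ s t, dist (δ s) (δ t)^2 = 2 - 2*Real.cos (s - t) := by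
    intro s t
    rw [dist_eq_norm]
    have he : δ s - δ t = (cos s - cos t) • a₀ + (sin s - sin t) • a₁ := by
      rw [hδ]; simp only
      rw [sub_smul, sub_smul]; abel
    rw [he, norm_add_sq_real]
    rw [real_inner_smul_left, real_inner_smul_right, h01]
    rw [norm_smul, norm_smul, mul_pow, mul_pow, hn0, hn1]
    simp only [Real.norm_eq_abs, sq_abs, mul_zero, one_pow]
    rw [Real.cos_sub]
    nlinarith [Real.sin_sq_add_cos_sq s, Real.sin_sq_add_cos_sq t]
  have hδlip : LipschitzWith 1 δ := by
    apply LipschitzWith.of_dist_le_mul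
    intro s t
    rw [NNReal.coe_one, one_mul, Real.dist_eq]
    have h1 := hδdist s t
    have h2 := two_sub_cos_le (s - t)
    have h3 : dist (δ s) (δ t)^2 ≤ |s - t|^2 := by rw [sq_abs]; linarith
    have h4 := abs_nonneg (s - t)
    nlinarith [dist_nonneg (x := δ s) (y := δ t)]
  have hcov : {x ∈ sphere (0:E3) 1 | ⟪v, x⟫ = 0} ⊆ δ '' Icc (-π) π := by
    rintro x ⟨hxs, hxv⟩
    have hxn : ‖x‖ = 1 := by simpa using hxs
    have hxK : x ∈ K := Submodule.mem_orthogonal_singleton_iff_inner_right.mpr hxv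
    set x' : K := ⟨x, hxK⟩ with hx'
    have hrepr := b.sum_repr x'
    have hexp : x = ⟪a₀, x⟫ • a₀ + ⟪a₁, x⟫ • a₁ := by
      have h2 : (x' : E3) = ((∑ i : Fin 2, b.repr x' i • b i : K) : E3) := by rw [hrepr]
      rw [hx'] at h2
      simp only [Fin.sum_univ_two] at h2
      push_cast at h2
      rw [b.repr_apply_apply, b.repr_apply_apply] at h2
      have hi0 : ⟪b 0, x'⟫ = ⟪a₀, x⟫ := rfl
      have hi1 : ⟪b 1, x'⟫ = ⟪a₁, x⟫ := rfl
      rw [hi0, hi1] at h2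
      exact h2
    set α := ⟪a₀, x⟫ with hα
    set β := ⟪a₁, x⟫ with hβ
    have hsum : α^2 + β^2 = 1 := by
      have h1 : ‖x‖^2 = α^2 + β^2 := by
        rw [hexp, norm_add_sq_real]
        rw [real_inner_smul_left, real_inner_smul_right, h01]
        rw [norm_smul, norm_smul, mul_pow, mul_pow, hn0, hn1]
        simp only [Real.norm_eq_abs, sq_abs, mul_zero, one_pow]
        ring
      rw [hxn] at h1
      linarith [h1]
    obtain ⟨t, ht, hc, hs⟩ := exists_cos_sin hsum
    exact ⟨t, ht, by rw [hδ]; simp only; rw [hc, hs]; exact hexp.symm⟩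
  calc μH[1] {x ∈ sphere (0:E3) 1 | ⟪v, x⟫ = 0} ≤ μH[1] (δ '' Icc (-π) π) :=
        measure_mono hcov
    _ ≤ ((1:NNReal) : ENNReal) ^ (1:ℝ) * μH[1] (Icc (-π) π) :=
        hδlip.hausdorffMeasure_image_le zero_le_one _
    _ = ENNReal.ofReal (2*π) := by
        rw [ENNReal.coe_one, ENNReal.one_rpow, one_mul,
          MeasureTheory.hausdorffMeasure_real, Real.volume_Icc]
        norm_num
        ring_nf
        rw [ENNReal.ofReal_mul' (by norm_num)]
        norm_num

lemma e3_ne_zero : e3 ≠ 0 := by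
  intro h
  have h2 : (1:ℝ) = 0 := by
    rw [show (1:ℝ) = e3 2 from rfl, h]
    rfl
  exact one_ne_zero h2

lemma part3 : IsGreatest {L : ENNReal | ∃ γ : ℝ → E3, IsClosedSphericalCurve γ ∧
    1 ≤ thickness (range γ) ∧ L = μH[1] (range γ)} (ENNReal.ofReal (2 * π)) := by
  constructor
  · refine ⟨stdcirc, stdcirc_curve, ?_, stdcirc_measure.symm⟩
    exact (part2 stdcirc stdcirc_curve).2 ⟨e3, e3_ne_zero, stdcirc_range⟩
  · rintro L ⟨γ, hγ, hth, rfl⟩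
    obtain ⟨v, hv, hr⟩ := (part2 γ hγ).1 hth
    rw [hr]
    exact circle_le hv

/-- For `Θ > 1` there is no closed spherical curve of thickness `≥ Θ`; the
closed spherical curves of thickness `≥ 1` are exactly those whose image is a
great circle; and the maximal length (1-dimensional Hausdorff measure of the
image) of a closed spherical curve of thickness `≥ 1` is `2π`. -/
theorem thickness_ge_one_classification :
    (∀ Θ : ℝ, 1 < Θ →
      ¬ ∃ γ : ℝ → E3, IsClosedSphericalCurve γ ∧
        ENNReal.ofReal Θ ≤ thickness (range γ)) ∧
    (∀ γ : ℝ → E3, IsClosedSphericalCurve γ →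
      (1 ≤ thickness (range γ) ↔
        ∃ v : E3, v ≠ 0 ∧ range γ = {x ∈ sphere (0 : E3) 1 | ⟪v, x⟫ = 0})) ∧
    IsGreatest {L : ENNReal | ∃ γ : ℝ → E3, IsClosedSphericalCurve γ ∧
        1 ≤ thickness (range γ) ∧ L = μH[1] (range γ)}
      (ENNReal.ofReal (2 * π)) := by
  exact ⟨part1, part2, part3⟩
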